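/- If f : ℝ² → ℝ is monotonically increasing in the two-dimensional sense (all mixed second-order increments over rectangles are nonnegative) and also left continuous (for every increasing sequence (s_k, x_k) converging to (s,x) with (s_k,x_k) ≤ (s,x) componentwise, f(s_k,x_k) → f(s,x)), then μ([s₁,s₂)×[x₁,x₂)) = f(s₂,x₂) − f(s₂,x₁) − f(s₁,x₂) + f(s₁,x₁) extends to a countably additive Borel measure on ℝ², i.e., there is a Borel measure μ on ℝ² with μ([s₁,s₂)×[x₁,x₂)) given by the above formula for all s₁<s₂, x₁<x₂. -/

import Mathlib

open MeasureTheory Set Filter Topology Real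

/-- Mixed second-order increment of a two-variable function over a rectangle. -/
noncomputable def mixedInc (f : ℝ → ℝ → ℝ) (s₁ s₂ x₁ x₂ : ℝ) : ℝ :=
  f s₂ x₂ - f s₂ x₁ - f s₁ x₂ + f s₁ x₁

/-- Two-dimensional variation of `f` on the rectangle `[t,s] × [a,x]`:
supremum over grid partitions of sums of absolute mixed second-order increments. -/
noncomputable def var2 (f : ℝ → ℝ → ℝ) (t s a x : ℝ) : ENNReal :=
  ⨆ m : ℕ, ⨆ n : ℕ, ⨆ σ : Fin (m+1) → ℝ, ⨆ τ : Fin (n+1) → ℝ,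
    ⨆ _ : StrictMono σ ∧ StrictMono τ ∧ σ 0 = t ∧ σ (Fin.last m) = s ∧
      τ 0 = a ∧ τ (Fin.last n) = x,
    ∑ i : Fin m, ∑ j : Fin n,
      ENNReal.ofReal |mixedInc f (σ i.castSucc) (σ i.succ) (τ j.castSucc) (τ j.succ)|

/-- One-dimensional total variation of `g` on `[a,b]`. -/
noncomputable def var1 (g : ℝ → ℝ) (a b : ℝ) : ENNReal :=
  ⨆ n : ℕ, ⨆ τ : Fin (n+1) → ℝ,
    ⨆ _ : StrictMono τ ∧ τ 0 = a ∧ τ (Fin.last n) = b,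
    ∑ j : Fin n, ENNReal.ofReal |g (τ j.succ) - g (τ j.castSucc)|

/-- `f` is monotonically increasing in the two-dimensional sense. -/
def Inc2 (f : ℝ → ℝ → ℝ) : Prop :=
  ∀ s₁ s₂ x₁ x₂ : ℝ, s₁ ≤ s₂ → x₁ ≤ x₂ → 0 ≤ mixedInc f s₁ s₂ x₁ x₂

/-- Joint left continuity of a two-variable function at `(s,x)`:
continuity along monotone approach from below in both variables. -/
def LeftCont2At (f : ℝ → ℝ → ℝ) (s x : ℝ) : Prop :=
  ∀ u v : ℕ → ℝ, Monotone u → Monotone v → (∀ k, u k ≤ s) → (∀ k, v k ≤ x) →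
    Tendsto u atTop (𝓝 s) → Tendsto v atTop (𝓝 x) →
    Tendsto (fun k => f (u k) (v k)) atTop (𝓝 (f s x))

/-- `g` has left derivative `d` at `x`. -/
def HasLeftDeriv (g : ℝ → ℝ) (x d : ℝ) : Prop :=
  Tendsto (fun h => (g x - g (x - h)) / h) (𝓝[>] (0:ℝ)) (𝓝 d)
namespace LS

open ProbabilityTheory
open scoped ENNReal NNReal

variable {f : ℝ → ℝ → ℝ}

/-- The flipped slice function: `sfun f c d t = F t d - F t c` where `F t y = f (-t) (-y)`. -/
noncomputable def sfun (f : ℝ → ℝ → ℝ) (c d : ℝ) : ℝ → ℝ :=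
  fun t => f (-t) (-d) - f (-t) (-c)

lemma sfun_nonneg (hinc : Inc2 f) {t₁ t₂ c d : ℝ} (ht : t₁ ≤ t₂) (hcd : c ≤ d) :
    0 ≤ sfun f c d t₂ - sfun f c d t₁ := by
  have h := hinc (-t₂) (-t₁) (-d) (-c) (by linarith) (by linarith)
  simp only [mixedInc] at h
  simp only [sfun]
  linarith

lemma sfun_mono (hinc : Inc2 f) {c d : ℝ} (hcd : c ≤ d) : Monotone (sfun f c d) := by
  intro t t' h
  have := sfun_nonneg hinc h hcd
  linarith

lemma sfun_tendsto_t (hlc : ∀ s x : ℝ, LeftCont2At f s x) (c d : ℝ) {u : ℕ → ℝ} {t : ℝ}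
    (hu : Antitone u) (hut : ∀ k, t ≤ u k) (hlim : Tendsto u atTop (𝓝 t)) :
    Tendsto (fun k => sfun f c d (u k)) atTop (𝓝 (sfun f c d t)) := by
  have h1 : Tendsto (fun k => f (-(u k)) (-d)) atTop (𝓝 (f (-t) (-d))) :=
    hlc (-t) (-d) (fun k => -(u k)) (fun _ => -d)
      (fun i j hij => neg_le_neg (hu hij)) monotone_const
      (fun k => neg_le_neg (hut k)) (fun _ => le_rfl) hlim.neg tendsto_const_nhds
  have h2 : Tendsto (fun k => f (-(u k)) (-c)) atTop (𝓝 (f (-t) (-c))) :=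
    hlc (-t) (-c) (fun k => -(u k)) (fun _ => -c)
      (fun i j hij => neg_le_neg (hu hij)) monotone_const
      (fun k => neg_le_neg (hut k)) (fun _ => le_rfl) hlim.neg tendsto_const_nhds
  exact h1.sub h2

lemma sfun_tendsto_y (hlc : ∀ s x : ℝ, LeftCont2At f s x) (c : ℝ) {z : ℕ → ℝ} {y : ℝ}
    (hz : Antitone z) (hzy : ∀ k, y ≤ z k) (hlim : Tendsto z atTop (𝓝 y)) (t : ℝ) :
    Tendsto (fun k => sfun f c (z k) t) atTop (𝓝 (sfun f c y t)) := by
  have h1 : Tendsto (fun k => f (-t) (-(z k))) atTop (𝓝 (f (-t) (-y))) :=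
    hlc (-t) (-y) (fun _ => -t) (fun k => -(z k)) monotone_const
      (fun i j hij => neg_le_neg (hz hij)) (fun _ => le_rfl)
      (fun k => neg_le_neg (hzy k)) tendsto_const_nhds hlim.neg
  exact h1.sub tendsto_const_nhds

variable (hinc : Inc2 f) (hlc : ∀ s x : ℝ, LeftCont2At f s x)

/-- The Stieltjes function `t ↦ F t d - F t c`. -/
noncomputable def SF (c d : ℝ) (hcd : c ≤ d) : StieltjesFunction ℝ where
  toFun := sfun f c d
  mono' := sfun_mono hinc hcd
  right_continuous' := by
    intro x
    rw [← continuousWithinAt_Ioi_iff_Ici,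
      (sfun_mono hinc hcd).continuousWithinAt_Ioi_iff_rightLim_eq]
    obtain ⟨u, hu_anti, hu_mem, hu_tendsto⟩ := exists_seq_strictAnti_tendsto x
    have h1 : Tendsto (fun k => sfun f c d (u k)) atTop
        (𝓝 (Function.rightLim (sfun f c d) x)) :=
      ((sfun_mono hinc hcd).tendsto_rightLim x).comp
        (tendsto_nhdsWithin_of_tendsto_nhds_of_eventually_within _ hu_tendsto
          (Eventually.of_forall hu_mem))
    exact tendsto_nhds_unique h1
      (sfun_tendsto_t hlc c d hu_anti.antitone (fun k => (hu_mem k).le) hu_tendsto)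

lemma SF_apply (c d : ℝ) (hcd : c ≤ d) (t : ℝ) : SF hinc hlc c d hcd t = sfun f c d t := rfl

lemma SF_measure_Ioc (c d : ℝ) (hcd : c ≤ d) (t₁ t₂ : ℝ) :
    (SF hinc hlc c d hcd).measure (Ioc t₁ t₂)
      = ENNReal.ofReal (sfun f c d t₂ - sfun f c d t₁) :=
  StieltjesFunction.measure_Ioc _ _ _

lemma SF_congr {c d d' : ℝ} (h : c ≤ d) (h' : c ≤ d') (hdd' : d = d') :
    (SF hinc hlc c d h).measure = (SF hinc hlc c d' h').measure := by
  subst hdd'; rfl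

lemma SF_measure_self (c : ℝ) : (SF hinc hlc c c le_rfl).measure = 0 := by
  have h : SF hinc hlc c c le_rfl = StieltjesFunction.const (R := ℝ) 0 := by
    ext x
    show sfun f c c x = _
    simp [sfun]
  rw [h, StieltjesFunction.measure_const]

lemma SF_measure_split {c d e : ℝ} (hcd : c ≤ d) (hde : d ≤ e) :
    (SF hinc hlc c e (hcd.trans hde)).measure
      = (SF hinc hlc c d hcd).measure + (SF hinc hlc d e hde).measure := by
  have h : SF hinc hlc c e (hcd.trans hde) = SF hinc hlc c d hcd + SF hinc hlc d e hde := by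
    ext x
    show sfun f c e x = sfun f c d x + sfun f d e x
    simp only [sfun]; ring
  rw [h, StieltjesFunction.measure_add]

section Strip

variable (n : ℤ)

/-- Clamp into the strip `[n, n+1]`. -/
noncomputable def clamp (n : ℤ) (y : ℝ) : ℝ := max (n : ℝ) (min y ((n : ℝ) + 1))

lemma le_clamp (y : ℝ) : (n : ℝ) ≤ clamp n y := le_max_left _ _

lemma clamp_le_top (y : ℝ) : clamp n y ≤ (n : ℝ) + 1 :=
  max_le (by linarith) (min_le_right _ _)

lemma clamp_mono {y y' : ℝ} (h : y ≤ y') : clamp n y ≤ clamp n y' :=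
  max_le_max le_rfl (min_le_min h le_rfl)

lemma clamp_of_le {y : ℝ} (h : y ≤ (n : ℝ)) : clamp n y = (n : ℝ) := by
  unfold clamp
  rw [min_eq_left (by linarith), max_eq_left h]

lemma clamp_of_ge {y : ℝ} (h : (n : ℝ) + 1 ≤ y) : clamp n y = (n : ℝ) + 1 := by
  unfold clamp
  rw [min_eq_right h, max_eq_right (by linarith)]

/-- Base measure on the strip: Stieltjes measure in `t` of `F t (n+1) - F t n`. -/
noncomputable def nu : Measure ℝ :=
  (SF hinc hlc (n : ℝ) ((n : ℝ) + 1) (by linarith)).measure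

/-- Measures in `t` of `F t (clamp n y) - F t n`. -/
noncomputable def rho (y : ℝ) : Measure ℝ :=
  (SF hinc hlc (n : ℝ) (clamp n y) (le_clamp n y)).measure

instance : SigmaFinite (nu hinc hlc n) := by unfold nu; infer_instance

instance (y : ℝ) : SigmaFinite (rho hinc hlc n y) := by unfold rho; infer_instance

instance : SFinite (nu hinc hlc n) := inferInstance

lemma nu_Ioc (t₁ t₂ : ℝ) :
    nu hinc hlc n (Ioc t₁ t₂)
      = ENNReal.ofReal (sfun f (n : ℝ) ((n : ℝ) + 1) t₂ - sfun f (n : ℝ) ((n : ℝ) + 1) t₁) :=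
  StieltjesFunction.measure_Ioc _ _ _

lemma rho_Ioc (y t₁ t₂ : ℝ) :
    rho hinc hlc n y (Ioc t₁ t₂)
      = ENNReal.ofReal (sfun f (n : ℝ) (clamp n y) t₂ - sfun f (n : ℝ) (clamp n y) t₁) :=
  StieltjesFunction.measure_Ioc _ _ _

lemma rho_split {y y' : ℝ} (h : y ≤ y') :
    rho hinc hlc n y' = rho hinc hlc n y
      + (SF hinc hlc (clamp n y) (clamp n y') (clamp_mono n h)).measure :=
  SF_measure_split hinc hlc (le_clamp n y) (clamp_mono n h)

lemma rho_le {y y' : ℝ} (h : y ≤ y') (s : Set ℝ) :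
    rho hinc hlc n y s ≤ rho hinc hlc n y' s := by
  rw [rho_split hinc hlc n h, Measure.add_apply]
  exact le_self_add

lemma rho_of_le {y : ℝ} (h : y ≤ (n : ℝ)) : rho hinc hlc n y = 0 := by
  have h1 : rho hinc hlc n y = (SF hinc hlc (n : ℝ) (n : ℝ) le_rfl).measure :=
    SF_congr hinc hlc _ _ (clamp_of_le n h)
  rw [h1, SF_measure_self]

lemma rho_of_ge {y : ℝ} (h : (n : ℝ) + 1 ≤ y) : rho hinc hlc n y = nu hinc hlc n :=
  SF_congr hinc hlc _ _ (clamp_of_ge n h)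

lemma rho_le_nu (y : ℝ) (s : Set ℝ) : rho hinc hlc n y s ≤ nu hinc hlc n s := by
  have h1 : rho hinc hlc n y s ≤ rho hinc hlc n (max y ((n : ℝ) + 1)) s :=
    rho_le hinc hlc n (le_max_left _ _) s
  rwa [rho_of_ge hinc hlc n (le_max_right _ _)] at h1

lemma rho_ac (y : ℝ) : rho hinc hlc n y ≪ nu hinc hlc n :=
  Measure.absolutelyContinuous_of_le (Measure.le_iff'.2 (rho_le_nu hinc hlc n y))

lemma rnDeriv_rho_mono {y y' : ℝ} (h : y ≤ y') :
    ∀ᵐ t ∂(nu hinc hlc n),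
      (rho hinc hlc n y).rnDeriv (nu hinc hlc n) t
        ≤ (rho hinc hlc n y').rnDeriv (nu hinc hlc n) t := by
  have hadd : (rho hinc hlc n y').rnDeriv (nu hinc hlc n)
      =ᵐ[nu hinc hlc n] (rho hinc hlc n y).rnDeriv (nu hinc hlc n)
        + ((SF hinc hlc (clamp n y) (clamp n y') (clamp_mono n h)).measure).rnDeriv
            (nu hinc hlc n) := by
    rw [rho_split hinc hlc n h]
    exact Measure.rnDeriv_add' _ _ _
  filter_upwards [hadd] with t ht
  rw [ht]
  exact le_self_add

/-- Limits of `rho` values on intervals along antitone sequences from above. -/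
lemma rho_Ioc_tendsto {z : ℕ → ℝ} {y : ℝ} (hz : Antitone z) (hzy : ∀ k, y ≤ z k)
    (hlim : Tendsto z atTop (𝓝 y)) (t₁ t₂ : ℝ) :
    Tendsto (fun k => rho hinc hlc n (z k) (Ioc t₁ t₂)) atTop
      (𝓝 (rho hinc hlc n y (Ioc t₁ t₂))) := by
  simp only [rho_Ioc]
  have hclanti : Antitone (fun k => clamp n (z k)) := fun i j h => clamp_mono n (hz h)
  have hclge : ∀ k, clamp n y ≤ clamp n (z k) := fun k => clamp_mono n (hzy k)
  have hcllim : Tendsto (fun k => clamp n (z k)) atTop (𝓝 (clamp n y)) := by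
    unfold clamp
    exact tendsto_const_nhds.max (hlim.min tendsto_const_nhds)
  have h2 := sfun_tendsto_y hlc (n : ℝ) hclanti hclge hcllim t₂
  have h1 := sfun_tendsto_y hlc (n : ℝ) hclanti hclge hcllim t₁
  exact ENNReal.tendsto_ofReal (h2.sub h1)

lemma rho_Ioc_iInf {z : ℕ → ℝ} {y : ℝ} (hz : Antitone z) (hzy : ∀ k, y ≤ z k)
    (hlim : Tendsto z atTop (𝓝 y)) (t₁ t₂ : ℝ) :
    ⨅ k, rho hinc hlc n (z k) (Ioc t₁ t₂) = rho hinc hlc n y (Ioc t₁ t₂) := by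
  have hanti : Antitone (fun k => rho hinc hlc n (z k) (Ioc t₁ t₂)) :=
    fun i j hij => rho_le hinc hlc n (hz hij) _
  exact tendsto_nhds_unique (tendsto_atTop_iInf hanti)
    (rho_Ioc_tendsto hinc hlc n hz hzy hlim t₁ t₂)

/-- Rational conditional CDF candidate: Radon–Nikodym derivatives. -/
noncomputable def cdf : ℝ → ℚ → ℝ :=
  fun t q => ((rho hinc hlc n (q : ℝ)).rnDeriv (nu hinc hlc n) t).toReal

lemma measurable_cdf : Measurable (cdf hinc hlc n) :=
  measurable_pi_lambda _ fun _ => (Measure.measurable_rnDeriv _ _).ennreal_toReal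

/-- The rational sequence `q + 1/(k+1)` decreasing to `q`. -/
def rseq (q : ℚ) (k : ℕ) : ℚ := q + 1 / (k + 1)

lemma rseq_gt (q : ℚ) (k : ℕ) : q < rseq q k :=
  lt_add_of_pos_right _ (by positivity)

lemma rseq_anti (q : ℚ) : Antitone (fun k => ((rseq q k : ℚ) : ℝ)) := by
  intro i j hij
  unfold rseq
  push_cast
  have h1 : (0 : ℝ) < (i : ℝ) + 1 := by positivity
  have h2 : (i : ℝ) + 1 ≤ (j : ℝ) + 1 := by
    have : (i : ℝ) ≤ j := Nat.cast_le.2 hij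
    linarith
  have := one_div_le_one_div_of_le h1 h2
  linarith

lemma rseq_tendsto (q : ℚ) :
    Tendsto (fun k => ((rseq q k : ℚ) : ℝ)) atTop (𝓝 (q : ℝ)) := by
  have h : (fun k : ℕ => ((rseq q k : ℚ) : ℝ)) = fun k : ℕ => (q : ℝ) + 1 / ((k : ℝ) + 1) := by
    funext k; unfold rseq; push_cast; ring
  rw [h]
  have := tendsto_one_div_add_atTop_nhds_zero_nat (𝕜 := ℝ)
  simpa using tendsto_const_nhds.add this

lemma ae_of_ae_restrict_Ioc {μ : Measure ℝ} {P : ℝ → Prop}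
    (h : ∀ m : ℕ, ∀ᵐ t ∂(μ.restrict (Ioc (-(m : ℝ)) m)), P t) : ∀ᵐ t ∂μ, P t := by
  rw [ae_iff]
  have hsub : {t | ¬ P t} ⊆ ⋃ m : ℕ, {t | ¬ P t} ∩ Ioc (-(m : ℝ)) m := by
    intro t ht
    obtain ⟨m, hm⟩ := exists_nat_gt |t|
    refine mem_iUnion.2 ⟨m, ht, ?_, ?_⟩
    · have := neg_abs_le t; linarith
    · have := le_abs_self t; linarith
  refine measure_mono_null hsub (measure_iUnion_null fun m => ?_)
  have hm := h m
  rw [ae_iff] at hm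
  calc μ ({t | ¬ P t} ∩ Ioc (-(m : ℝ)) m)
      = (μ.restrict (Ioc (-(m : ℝ)) m)) {t | ¬ P t} :=
        (Measure.restrict_apply' measurableSet_Ioc).symm
    _ = 0 := hm

lemma rnDeriv_iInf_ae (q : ℚ) :
    (rho hinc hlc n (q : ℝ)).rnDeriv (nu hinc hlc n)
      =ᵐ[nu hinc hlc n]
        fun t => ⨅ k, (rho hinc hlc n ((rseq q k : ℚ) : ℝ)).rnDeriv (nu hinc hlc n) t := by
  set ν := nu hinc hlc n with hν
  set g := (rho hinc hlc n (q : ℝ)).rnDeriv ν with hg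
  set D : ℕ → ℝ → ℝ≥0∞ := fun k => (rho hinc hlc n ((rseq q k : ℚ) : ℝ)).rnDeriv ν with hD
  have hD_meas : ∀ k, Measurable (D k) := fun k => Measure.measurable_rnDeriv _ _
  have h_anti_ae : ∀ k : ℕ, ∀ᵐ t ∂ν, D (k + 1) t ≤ D k t := fun k =>
    rnDeriv_rho_mono hinc hlc n (rseq_anti q (Nat.le_succ k))
  have h_le : ∀ k, ∀ᵐ t ∂ν, g t ≤ D k t := fun k =>
    rnDeriv_rho_mono hinc hlc n (le_of_lt (by exact_mod_cast rseq_gt q k))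
  apply ae_of_ae_restrict_Ioc
  intro m
  set I := Ioc (-(m : ℝ)) (m : ℝ) with hI
  have hν_fin : ν I ≠ ∞ := by
    rw [hν, nu_Ioc]
    exact ENNReal.ofReal_ne_top
  have h_int : ∀ y : ℝ, ∫⁻ t in I, (rho hinc hlc n y).rnDeriv ν t ∂ν = rho hinc hlc n y I :=
    fun y => Measure.setLIntegral_rnDeriv (rho_ac hinc hlc n y) I
  have h_fin0 : ∫⁻ t in I, D 0 t ∂ν ≠ ∞ := by
    rw [hD, h_int]
    exact ((rho_le_nu hinc hlc n _ I).trans_lt hν_fin.lt_top).ne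
  have h_iInf_int : ∫⁻ t in I, (⨅ k, D k t) ∂ν = ⨅ k, ∫⁻ t in I, D k t ∂ν :=
    lintegral_iInf_ae (fun k => hD_meas k) (fun k => ae_restrict_of_ae (h_anti_ae k)) h_fin0
  have h_rhs : (⨅ k, ∫⁻ t in I, D k t ∂ν) = rho hinc hlc n (q : ℝ) I := by
    simp only [hD, h_int]
    exact rho_Ioc_iInf hinc hlc n (rseq_anti q)
      (fun k => le_of_lt (by exact_mod_cast rseq_gt q k)) (rseq_tendsto q) _ _
  refine ae_eq_of_ae_le_of_lintegral_le ?_ ?_ ?_ ?_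
  · refine ae_restrict_of_ae ?_
    have := ae_all_iff.2 h_le
    filter_upwards [this] with t ht
    exact le_iInf ht
  · rw [h_int]
    exact ((rho_le_nu hinc hlc n _ I).trans_lt hν_fin.lt_top).ne
  · exact (Measurable.iInf hD_meas).aemeasurable
  · rw [h_iInf_int, h_rhs, h_int]

lemma ae_isRatStieltjesPoint :
    ∀ᵐ t ∂(nu hinc hlc n), IsRatStieltjesPoint (cdf hinc hlc n) t := by
  set ν := nu hinc hlc n with hν
  have h_fin : ∀ᵐ t ∂ν, ∀ q : ℚ, (rho hinc hlc n (q : ℝ)).rnDeriv ν t < ∞ :=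
    ae_all_iff.2 fun q => Measure.rnDeriv_lt_top _ _
  have h_mono : ∀ᵐ t ∂ν, ∀ q q' : ℚ, q ≤ q' →
      (rho hinc hlc n (q : ℝ)).rnDeriv ν t ≤ (rho hinc hlc n (q' : ℝ)).rnDeriv ν t := by
    rw [ae_all_iff]
    intro q
    rw [ae_all_iff]
    intro q'
    by_cases h : q ≤ q'
    · filter_upwards [rnDeriv_rho_mono hinc hlc n (show ((q:ℝ) ≤ (q':ℝ)) by exact_mod_cast h)]
        with t ht _
      exact ht
    · filter_upwards with t ht
      exact absurd ht h
  have h_bot : ∀ᵐ t ∂ν, ∀ q : ℚ, q ≤ (n : ℚ) → (rho hinc hlc n (q : ℝ)).rnDeriv ν t = 0 := by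
    rw [ae_all_iff]
    intro q
    by_cases h : q ≤ (n : ℚ)
    · have h0 : rho hinc hlc n (q : ℝ) = 0 := rho_of_le hinc hlc n (by exact_mod_cast h)
      filter_upwards [Measure.rnDeriv_zero ν] with t ht _
      rw [h0, ht]
      rfl
    · filter_upwards with t ht
      exact absurd ht h
  have h_top : ∀ᵐ t ∂ν, ∀ q : ℚ, (n : ℚ) + 1 ≤ q → (rho hinc hlc n (q : ℝ)).rnDeriv ν t = 1 := by
    rw [ae_all_iff]
    intro q
    by_cases h : (n : ℚ) + 1 ≤ q
    · have h0 : rho hinc hlc n (q : ℝ) = ν := rho_of_ge hinc hlc n (by exact_mod_cast h)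
      filter_upwards [Measure.rnDeriv_self ν] with t ht _
      rw [h0, ht]
    · filter_upwards with t ht
      exact absurd ht h
  have h_inf : ∀ᵐ t ∂ν, ∀ q : ℚ,
      (rho hinc hlc n (q : ℝ)).rnDeriv ν t
        = ⨅ k, (rho hinc hlc n ((rseq q k : ℚ) : ℝ)).rnDeriv ν t :=
    ae_all_iff.2 fun q => rnDeriv_iInf_ae hinc hlc n q
  filter_upwards [h_fin, h_mono, h_bot, h_top, h_inf] with t hfin hmono hbot htop hinf
  have hmono' : Monotone (cdf hinc hlc n t) := by
    intro q q' h
    exact (ENNReal.toReal_le_toReal (hfin q).ne (hfin q').ne).2 (hmono q q' h)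
  refine ⟨hmono', ?_, ?_, ?_⟩
  · -- tendsto atTop 1
    have hev : (cdf hinc hlc n t) =ᶠ[atTop] fun _ => (1 : ℝ) := by
      filter_upwards [eventually_ge_atTop ((n : ℚ) + 1)] with q hq
      unfold cdf
      rw [htop q hq]
      simp
    exact (tendsto_congr' hev).2 tendsto_const_nhds
  · -- tendsto atBot 0
    have hev : (cdf hinc hlc n t) =ᶠ[atBot] fun _ => (0 : ℝ) := by
      filter_upwards [eventually_le_atBot ((n : ℚ))] with q hq
      unfold cdf
      rw [hbot q hq]
      simp
    exact (tendsto_congr' hev).2 tendsto_const_nhds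
  · -- iInf over Ioi q
    intro q
    have hbdd : BddBelow (range fun r : Ioi q => cdf hinc hlc n t r) := by
      refine ⟨0, ?_⟩
      rintro x ⟨r, rfl⟩
      exact ENNReal.toReal_nonneg
    apply le_antisymm
    · have h1 : (⨅ r : Ioi q, cdf hinc hlc n t r) ≤ ⨅ k : ℕ, cdf hinc hlc n t (rseq q k) :=
        le_ciInf fun k => ciInf_le hbdd ⟨rseq q k, rseq_gt q k⟩
      have h2 : (⨅ k : ℕ, cdf hinc hlc n t (rseq q k)) = cdf hinc hlc n t q := by
        unfold cdf
        rw [← ENNReal.toReal_iInf (fun k => (hfin (rseq q k)).ne), ← hinf q]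
      rwa [h2] at h1
    · exact le_ciInf fun r => hmono' (le_of_lt r.2)

/-- The conditional CDF (Stieltjes function valued) obtained from `cdf`. -/
noncomputable def Phi : ℝ → StieltjesFunction ℝ :=
  stieltjesOfMeasurableRat (cdf hinc hlc n) (measurable_cdf hinc hlc n)

lemma Phi_nonneg (t y : ℝ) : 0 ≤ Phi hinc hlc n t y :=
  stieltjesOfMeasurableRat_nonneg _ _ _

lemma Phi_le_one (t y : ℝ) : Phi hinc hlc n t y ≤ 1 :=
  stieltjesOfMeasurableRat_le_one _ _ _

lemma measurable_Phi (y : ℝ) : Measurable fun t => Phi hinc hlc n t y :=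
  measurable_stieltjesOfMeasurableRat _ y

/-- The Markov kernel given by the conditional CDF. -/
noncomputable def Ker : Kernel ℝ ℝ where
  toFun := fun t => (Phi hinc hlc n t).measure
  measurable' := measurable_measure_stieltjesOfMeasurableRat _

instance : IsMarkovKernel (Ker hinc hlc n) := by
  constructor
  intro t
  show IsProbabilityMeasure (Phi hinc hlc n t).measure
  unfold Phi
  infer_instance

lemma exists_rat_seq (y : ℝ) :
    ∃ qs : ℕ → ℚ, Antitone (fun k => ((qs k : ℚ) : ℝ)) ∧ (∀ k, y < qs k) ∧
      Tendsto (fun k => ((qs k : ℚ) : ℝ)) atTop (𝓝 y) := by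
  obtain ⟨u, hu_anti, hu_mem, hu_tendsto⟩ := exists_seq_strictAnti_tendsto y
  have h : ∀ k, ∃ q : ℚ, u (k + 1) < (q : ℝ) ∧ (q : ℝ) < u k :=
    fun k => exists_rat_btwn (hu_anti (lt_add_one k))
  choose qs h1 h2 using h
  refine ⟨qs, ?_, fun k => (hu_mem (k + 1)).trans (h1 k), ?_⟩
  · apply antitone_nat_of_succ_le
    intro k
    exact ((h2 (k + 1)).trans (h1 k)).le
  · refine tendsto_of_tendsto_of_tendsto_of_le_of_le
      (hu_tendsto.comp (tendsto_add_atTop_nat 1)) hu_tendsto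
      (fun k => (h1 k).le) (fun k => (h2 k).le)

lemma lintegral_Phi {t₁ t₂ : ℝ} (y : ℝ) :
    ∫⁻ t in Ioc t₁ t₂, ENNReal.ofReal (Phi hinc hlc n t y) ∂(nu hinc hlc n)
      = rho hinc hlc n y (Ioc t₁ t₂) := by
  set ν := nu hinc hlc n with hν
  have hν_fin : ν (Ioc t₁ t₂) ≠ ∞ := by
    rw [hν, nu_Ioc]
    exact ENNReal.ofReal_ne_top
  have hrat : ∀ q : ℚ, ∫⁻ t in Ioc t₁ t₂, ENNReal.ofReal (Phi hinc hlc n t (q : ℝ)) ∂ν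
      = rho hinc hlc n (q : ℝ) (Ioc t₁ t₂) := by
    intro q
    have hae : (fun t => ENNReal.ofReal (Phi hinc hlc n t (q : ℝ)))
        =ᵐ[ν] (rho hinc hlc n (q : ℝ)).rnDeriv ν := by
      filter_upwards [ae_isRatStieltjesPoint hinc hlc n,
        Measure.rnDeriv_lt_top (rho hinc hlc n (q : ℝ)) ν] with t hgood hlt
      rw [show Phi hinc hlc n t (q : ℝ) = cdf hinc hlc n t q from ?_]
      · exact ENNReal.ofReal_toReal hlt.ne
      · rw [Phi, stieltjesOfMeasurableRat_eq, toRatCDF_of_isRatStieltjesPoint hgood]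
    rw [lintegral_congr_ae (ae_restrict_of_ae hae)]
    exact Measure.setLIntegral_rnDeriv (rho_ac hinc hlc n _) _
  obtain ⟨qs, hqs_anti, hqs_gt, hqs_tendsto⟩ := exists_rat_seq y
  have h1 : Tendsto (fun k => ∫⁻ t in Ioc t₁ t₂,
      ENNReal.ofReal (Phi hinc hlc n t ((qs k : ℚ) : ℝ)) ∂ν) atTop
      (𝓝 (∫⁻ t in Ioc t₁ t₂, ENNReal.ofReal (Phi hinc hlc n t y) ∂ν)) := by
    refine tendsto_lintegral_of_dominated_convergence (fun _ => 1) ?_ ?_ ?_ ?_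
    · exact fun k => (measurable_Phi hinc hlc n ((qs k : ℚ) : ℝ)).ennreal_ofReal
    · intro k
      filter_upwards with t
      exact ENNReal.ofReal_le_one.2 (Phi_le_one hinc hlc n t _)
    · simpa using hν_fin
    · filter_upwards with t
      refine ENNReal.tendsto_ofReal ?_
      have hrc := (Phi hinc hlc n t).right_continuous y
      refine hrc.tendsto.comp ?_
      refine tendsto_nhdsWithin_of_tendsto_nhds_of_eventually_within _ hqs_tendsto ?_
      filter_upwards with k
      exact (hqs_gt k).le
  have h2 : Tendsto (fun k => rho hinc hlc n ((qs k : ℚ) : ℝ) (Ioc t₁ t₂)) atTop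
      (𝓝 (rho hinc hlc n y (Ioc t₁ t₂))) :=
    rho_Ioc_tendsto hinc hlc n hqs_anti (fun k => (hqs_gt k).le) hqs_tendsto t₁ t₂
  simp only [hrat] at h1
  exact tendsto_nhds_unique h1 h2

/-- The measure on the strip `ℝ × (n, n+1]`. -/
noncomputable def strip : Measure (ℝ × ℝ) :=
  (Measure.compProd (nu hinc hlc n) (Ker hinc hlc n)).restrict
    (univ ×ˢ Ioc (n : ℝ) ((n : ℝ) + 1))

lemma strip_rect {t₁ t₂ y₁ y₂ : ℝ} (ht : t₁ ≤ t₂) (hy : y₁ ≤ y₂) :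
    strip hinc hlc n (Ioc t₁ t₂ ×ˢ Ioc y₁ y₂)
      = ENNReal.ofReal (sfun f (clamp n y₁) (clamp n y₂) t₂
          - sfun f (clamp n y₁) (clamp n y₂) t₁) := by
  set ν := nu hinc hlc n with hν
  set Y₁ := max y₁ (n : ℝ) with hY₁
  set Y₂ := min y₂ ((n : ℝ) + 1) with hY₂
  have hc1 : clamp n Y₁ = clamp n y₁ := by
    rw [hY₁]
    unfold clamp
    rw [min_max_distrib_right, min_eq_left (by linarith : (n : ℝ) ≤ (n : ℝ) + 1),
      max_comm (min y₁ ((n : ℝ) + 1)) (n : ℝ), ← max_assoc, max_self]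
  have hc2 : clamp n Y₂ = clamp n y₂ := by
    rw [hY₂]
    unfold clamp
    rw [min_assoc, min_self]
  have hres : strip hinc hlc n (Ioc t₁ t₂ ×ˢ Ioc y₁ y₂)
      = ∫⁻ t in Ioc t₁ t₂, Ker hinc hlc n t (Ioc Y₁ Y₂) ∂ν := by
    rw [strip, Measure.restrict_apply (measurableSet_Ioc.prod measurableSet_Ioc),
      prod_inter_prod, inter_univ, Ioc_inter_Ioc]
    exact Measure.compProd_apply_prod measurableSet_Ioc measurableSet_Ioc
  rw [hres]
  rcases le_or_gt Y₁ Y₂ with hY | hY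
  · have hKer : ∀ t, Ker hinc hlc n t (Ioc Y₁ Y₂)
        = ENNReal.ofReal (Phi hinc hlc n t Y₂) - ENNReal.ofReal (Phi hinc hlc n t Y₁) := by
      intro t
      show (Phi hinc hlc n t).measure (Ioc Y₁ Y₂) = _
      rw [StieltjesFunction.measure_Ioc,
        ENNReal.ofReal_sub _ (Phi_nonneg hinc hlc n t Y₁)]
    simp only [hKer]
    rw [lintegral_sub ((measurable_Phi hinc hlc n Y₁).ennreal_ofReal) ?_ ?_]
    · rw [lintegral_Phi hinc hlc n Y₂, lintegral_Phi hinc hlc n Y₁, rho_Ioc, rho_Ioc, hc1, hc2,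
        ← ENNReal.ofReal_sub _ (sfun_nonneg hinc ht (le_clamp n y₁))]
      congr 1
      simp only [sfun]
      ring
    · rw [lintegral_Phi hinc hlc n Y₁, rho_Ioc]
      exact ENNReal.ofReal_ne_top
    · filter_upwards with t
      exact ENNReal.ofReal_le_ofReal ((Phi hinc hlc n t).mono hY)
  · have hempty : Ioc Y₁ Y₂ = (∅ : Set ℝ) := Ioc_eq_empty hY.not_gt
    have hclamps : clamp n y₁ = clamp n y₂ := by
      refine le_antisymm (clamp_mono n hy) ?_
      rcases lt_max_iff.1 hY with h | h
      · rcases min_lt_iff.1 h with h' | h'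
        · linarith
        · rw [clamp_of_ge n h'.le, clamp_of_ge n (by linarith : (n : ℝ) + 1 ≤ y₂)]
      · rcases min_lt_iff.1 h with h' | h'
        · rw [clamp_of_le n h'.le, clamp_of_le n (by linarith : y₁ ≤ (n : ℝ))]
        · linarith
    rw [hclamps]
    simp [hempty, sfun]

end Strip

/-- The total measure: sum over all the strips. -/
noncomputable def mtot : Measure (ℝ × ℝ) :=
  Measure.sum (fun n : ℤ => strip hinc hlc n)

include hinc in
lemma tele {t₁ t₂ y₁ y₂ : ℝ} (ht : t₁ ≤ t₂) (hy : y₁ < y₂) :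
    ∑' n : ℤ, ENNReal.ofReal (sfun f (clamp n y₁) (clamp n y₂) t₂
        - sfun f (clamp n y₁) (clamp n y₂) t₁)
      = ENNReal.ofReal (sfun f y₁ y₂ t₂ - sfun f y₁ y₂ t₁) := by
  set φ : ℝ → ℝ := fun c => f (-t₂) (-c) - f (-t₁) (-c) with hφ
  set γ : ℤ → ℝ := fun m => φ (min y₂ (max y₁ (m : ℝ))) with hγ
  have hsfun : ∀ c d : ℝ, sfun f c d t₂ - sfun f c d t₁ = φ d - φ c := by
    intro c d
    simp only [sfun, hφ]
    ring
  have hterm : ∀ n : ℤ, sfun f (clamp n y₁) (clamp n y₂) t₂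
      - sfun f (clamp n y₁) (clamp n y₂) t₁ = γ (n + 1) - γ n := by
    intro n
    rw [hsfun]
    have hcast : ((n + 1 : ℤ) : ℝ) = (n : ℝ) + 1 := by push_cast; ring
    rcases le_or_gt y₂ (n : ℝ) with h | h
    · have e1 : clamp n y₁ = (n : ℝ) := clamp_of_le n (hy.le.trans h)
      have e2 : clamp n y₂ = (n : ℝ) := clamp_of_le n h
      have e3 : min y₂ (max y₁ ((n : ℝ))) = y₂ := min_eq_left (h.trans (le_max_right _ _))
      have e4 : min y₂ (max y₁ ((n : ℝ) + 1)) = y₂ :=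
        min_eq_left ((h.trans (by linarith)).trans (le_max_right _ _))
      rw [e1, e2, hγ]
      simp only [hcast, e3, e4]
      ring
    · rcases le_or_gt ((n : ℝ) + 1) y₁ with h' | h'
      · have e1 : clamp n y₁ = (n : ℝ) + 1 := clamp_of_ge n h'
        have e2 : clamp n y₂ = (n : ℝ) + 1 := clamp_of_ge n (h'.trans hy.le)
        have e3 : min y₂ (max y₁ ((n : ℝ) + 1)) = y₁ := by
          rw [max_eq_left h', min_eq_right hy.le]
        have e4 : min y₂ (max y₁ ((n : ℝ))) = y₁ := by
          rw [max_eq_left (by linarith : (n : ℝ) ≤ y₁), min_eq_right hy.le]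
        rw [e1, e2, hγ]
        simp only [hcast, e3, e4]
        ring
      · have e2 : clamp n y₂ = min y₂ ((n : ℝ) + 1) := by
          unfold clamp
          exact max_eq_right (le_min h.le (by linarith))
        have e1 : clamp n y₁ = max y₁ (n : ℝ) := by
          unfold clamp
          rw [min_eq_left h'.le, max_comm]
        have e3 : min y₂ (max y₁ ((n : ℝ) + 1)) = min y₂ ((n : ℝ) + 1) := by
          rw [max_eq_right h'.le]
        have e4 : min y₂ (max y₁ ((n : ℝ))) = max y₁ (n : ℝ) :=
          min_eq_right (max_le hy.le h.le)
        rw [e1, e2, hγ]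
        simp only [hcast, e3, e4]
  set N₁ := ⌊y₁⌋ with hN₁
  set N₂ := ⌊y₂⌋ with hN₂
  have hsupp : ∀ n : ℤ, n ∉ Finset.Icc N₁ N₂ →
      ENNReal.ofReal (sfun f (clamp n y₁) (clamp n y₂) t₂
        - sfun f (clamp n y₁) (clamp n y₂) t₁) = 0 := by
    intro n hn
    rw [Finset.mem_Icc, not_and_or] at hn
    have hz : clamp n y₁ = clamp n y₂ := by
      rcases hn with h | h
      · -- n < N₁, so n + 1 ≤ ⌊y₁⌋ hence (n:ℝ)+1 ≤ y₁
        have h1 : n + 1 ≤ N₁ := by omega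
        have h2 : ((n : ℝ) + 1) ≤ y₁ := by
          have := (Int.le_floor).1 (hN₁ ▸ h1)
          push_cast at this ⊢
          linarith
        rw [clamp_of_ge n h2, clamp_of_ge n (h2.trans hy.le)]
      · -- N₂ < n, so y₂ ≤ n
        have h1 : N₂ + 1 ≤ n := by omega
        have h2 : y₂ ≤ (n : ℝ) := by
          have hlt := Int.lt_floor_add_one y₂
          have : ((N₂ + 1 : ℤ) : ℝ) ≤ (n : ℝ) := by exact_mod_cast h1
          push_cast at this
          linarith
        rw [clamp_of_le n (hy.le.trans h2), clamp_of_le n h2]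
    rw [hz]
    have h0 : sfun f (clamp n y₂) (clamp n y₂) t₂ - sfun f (clamp n y₂) (clamp n y₂) t₁ = 0 := by
      simp [sfun]
    rw [h0]
    simp
  rw [tsum_eq_sum hsupp, ← ENNReal.ofReal_sum_of_nonneg
    (fun n _ => sfun_nonneg hinc ht (clamp_mono n hy.le))]
  congr 1
  have hN : N₁ ≤ N₂ := Int.floor_le_floor hy.le
  have htel : ∀ M : ℤ, N₁ ≤ M →
      ∑ n ∈ Finset.Icc N₁ M, (γ (n + 1) - γ n) = γ (M + 1) - γ N₁ := by
    refine Int.le_induction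
      (motive := fun M _ => ∑ n ∈ Finset.Icc N₁ M, (γ (n + 1) - γ n) = γ (M + 1) - γ N₁) ?_ ?_
    · show ∑ n ∈ Finset.Icc N₁ N₁, (γ (n + 1) - γ n) = γ (N₁ + 1) - γ N₁
      rw [Finset.Icc_self, Finset.sum_singleton]
    · intro M hM ih
      have hins : Finset.Icc N₁ (M + 1) = insert (M + 1) (Finset.Icc N₁ M) := by
        ext x
        simp only [Finset.mem_Icc, Finset.mem_insert]
        omega
      have hnotmem : (M + 1) ∉ Finset.Icc N₁ M := by
        simp only [Finset.mem_Icc]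
        omega
      rw [hins, Finset.sum_insert hnotmem, ih]
      ring
  calc ∑ n ∈ Finset.Icc N₁ N₂, (sfun f (clamp n y₁) (clamp n y₂) t₂
        - sfun f (clamp n y₁) (clamp n y₂) t₁)
      = ∑ n ∈ Finset.Icc N₁ N₂, (γ (n + 1) - γ n) := Finset.sum_congr rfl fun n _ => hterm n
    _ = γ (N₂ + 1) - γ N₁ := htel N₂ hN
    _ = sfun f y₁ y₂ t₂ - sfun f y₁ y₂ t₁ := by
        have hend2 : γ (N₂ + 1) = φ y₂ := by
          have h1 : y₂ ≤ ((N₂ + 1 : ℤ) : ℝ) := by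
            rw [hN₂]
            push_cast
            linarith [Int.lt_floor_add_one y₂]
          show φ (min y₂ (max y₁ ((N₂ + 1 : ℤ) : ℝ))) = φ y₂
          rw [min_eq_left (h1.trans (le_max_right _ _))]
        have hend1 : γ N₁ = φ y₁ := by
          have h1 : ((N₁ : ℤ) : ℝ) ≤ y₁ := by
            rw [hN₁]
            exact_mod_cast Int.floor_le y₁
          show φ (min y₂ (max y₁ ((N₁ : ℤ) : ℝ))) = φ y₁
          rw [max_eq_left h1, min_eq_right hy.le]
        rw [hend1, hend2, hsfun]

end LS

/-- A left continuous, two-dimensionally monotonically increasing function generates a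
countably additive Borel measure on `ℝ²` whose value on half-open rectangles is
the mixed second-order increment. -/
theorem exists_lebesgue_stieltjes_measure (f : ℝ → ℝ → ℝ)
    (hinc : Inc2 f) (hlc : ∀ s x : ℝ, LeftCont2At f s x) :
    ∃ μ : Measure (ℝ × ℝ),
      ∀ s₁ s₂ x₁ x₂ : ℝ, s₁ < s₂ → x₁ < x₂ →
        μ (Set.Ico s₁ s₂ ×ˢ Set.Ico x₁ x₂) =
          ENNReal.ofReal (mixedInc f s₁ s₂ x₁ x₂) := by
  classical
  refine ⟨Measure.map (fun p : ℝ × ℝ => (-p.1, -p.2)) (LS.mtot hinc hlc), ?_⟩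
  intro s₁ s₂ x₁ x₂ hs hx
  have hmeas_map : Measurable fun p : ℝ × ℝ => (-p.1, -p.2) :=
    (measurable_fst.neg.prodMk measurable_snd.neg)
  rw [Measure.map_apply hmeas_map (measurableSet_Ico.prod measurableSet_Ico)]
  have hpre : (fun p : ℝ × ℝ => (-p.1, -p.2)) ⁻¹' (Set.Ico s₁ s₂ ×ˢ Set.Ico x₁ x₂)
      = Ioc (-s₂) (-s₁) ×ˢ Ioc (-x₂) (-x₁) := by
    ext p
    simp only [mem_preimage, mem_prod, mem_Ico, mem_Ioc]
    constructor
    · rintro ⟨⟨h1, h2⟩, h3, h4⟩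
      exact ⟨⟨by linarith, by linarith⟩, by linarith, by linarith⟩
    · rintro ⟨⟨h1, h2⟩, h3, h4⟩
      exact ⟨⟨by linarith, by linarith⟩, by linarith, by linarith⟩
  rw [hpre, LS.mtot, Measure.sum_apply _ (measurableSet_Ioc.prod measurableSet_Ioc)]
  have ht : (-s₂) ≤ (-s₁) := by linarith
  have hy : (-x₂) < (-x₁) := by linarith
  calc ∑' n : ℤ, LS.strip hinc hlc n (Ioc (-s₂) (-s₁) ×ˢ Ioc (-x₂) (-x₁))
      = ∑' n : ℤ, ENNReal.ofReal (LS.sfun f (LS.clamp n (-x₂)) (LS.clamp n (-x₁)) (-s₁)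
          - LS.sfun f (LS.clamp n (-x₂)) (LS.clamp n (-x₁)) (-s₂)) :=
        tsum_congr fun n => LS.strip_rect hinc hlc n ht hy.le
    _ = ENNReal.ofReal (LS.sfun f (-x₂) (-x₁) (-s₁) - LS.sfun f (-x₂) (-x₁) (-s₂)) :=
        LS.tele hinc ht hy
    _ = ENNReal.ofReal (mixedInc f s₁ s₂ x₁ x₂) := by
        congr 1
        simp only [LS.sfun, mixedInc, neg_neg]
        ring
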